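/- arXiv:2203.05610 — 3 statements merged into one kernel-verified Lean document; each statement's English description precedes it below -/
import Mathlib

section
/- Murphy–Golub–Wathen property: let M = [[A, B],[Bᵀ, 0]] with A symmetric positive definite and B of full column rank, and let P = [[A, 0],[0, S]] with S = Bᵀ A⁻¹ B the (negated) Schur complement. Then every eigenvalue λ of P⁻¹M satisfies λ = 1, λ = (1+√5)/2, or λ = (1−√5)/2. -/
open Matrix

theorem mgw_eigenvalues {n m : ℕ}
    (A : Matrix (Fin n) (Fin n) ℝ) (B : Matrix (Fin n) (Fin m) ℝ)
    (hA : A.PosDef) (hB : B.rank = m) (hmn : m ≤ n)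
    (M P : Matrix (Fin n ⊕ Fin m) (Fin n ⊕ Fin m) ℝ)
    (hM : M = Matrix.fromBlocks A B Bᵀ 0)
    (hP : P = Matrix.fromBlocks A 0 0 (Bᵀ * A⁻¹ * B))
    (lam : ℂ)
    (hlam : ((P⁻¹ * M).map (Complex.ofReal) - lam • 1).det = 0) :
    lam = 1 ∨ lam = (1 + Real.sqrt 5) / 2 ∨ lam = (1 - Real.sqrt 5) / 2 := by
  classical
  set f : ℝ →+* ℂ := Complex.ofRealHom with hfdef
  have hAinv : (A⁻¹).PosDef := hA.inv
  -- B has injective mulVec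
  have hBinj : Function.Injective B.mulVec := by
    have h1 := LinearMap.finrank_range_add_finrank_ker B.mulVecLin
    rw [show Module.finrank ℝ (LinearMap.range B.mulVecLin) = B.rank from rfl, hB] at h1
    simp only [Module.finrank_fintype_fun_eq_card, Fintype.card_fin] at h1
    have hker : LinearMap.ker B.mulVecLin = ⊥ :=
      Submodule.finrank_eq_zero.mp (by omega)
    exact LinearMap.ker_eq_bot.mp hker
  -- S is positive definite
  have hS : (Bᵀ * A⁻¹ * B).PosDef := by
    refine Matrix.PosDef.of_dotProduct_mulVec_pos (by simpa using Matrix.isHermitian_conjTranspose_mul_mul B hAinv.1) fun x hx => ?_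
    have hBx : B *ᵥ x ≠ 0 := fun h => hx (hBinj (by simpa using h))
    have hpos := hAinv.dotProduct_mulVec_pos hBx
    have heq : star x ⬝ᵥ (Bᵀ * A⁻¹ * B) *ᵥ x = star (B *ᵥ x) ⬝ᵥ A⁻¹ *ᵥ (B *ᵥ x) := by
      rw [star_trivial, star_trivial, ← mulVec_mulVec, ← mulVec_mulVec,
        dotProduct_mulVec, vecMul_transpose]
    rw [heq]
    exact hpos
  have hdetA : A.det ≠ 0 := ne_of_gt hA.det_pos
  have hdetS : (Bᵀ * A⁻¹ * B).det ≠ 0 := ne_of_gt hS.det_pos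
  have hdetP : P.det ≠ 0 := by
    rw [hP, det_fromBlocks_zero₂₁]
    exact mul_ne_zero hdetA hdetS
  have hPunit : IsUnit P.det := hdetP.isUnit
  -- det (Mℂ - lam • Pℂ) = 0
  have key : ((M.map f) - lam • (P.map f)).det = 0 := by
    have h1 : (M.map f) - lam • (P.map f) = (P.map f) * ((P⁻¹ * M).map f - lam • 1) := by
      rw [Matrix.mul_sub, ← Matrix.map_mul, ← Matrix.mul_assoc,
        Matrix.mul_nonsing_inv _ hPunit, Matrix.one_mul]
      congr 1
      rw [Matrix.mul_smul, Matrix.mul_one]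
    rw [h1, det_mul]
    have : ((P⁻¹ * M).map f - lam • 1).det = 0 := hlam
    rw [this, mul_zero]
  obtain ⟨v, hv0, hv⟩ := (Matrix.exists_mulVec_eq_zero_iff).mpr key
  set x : Fin n → ℂ := v ∘ Sum.inl with hxdef
  set y : Fin m → ℂ := v ∘ Sum.inr with hydef
  set Ac := A.map f with hAc
  set Bc := B.map f with hBc
  set Sc := (Bᵀ * A⁻¹ * B).map f with hScdef
  have hblocks : (M.map f) - lam • (P.map f) =
      fromBlocks (Ac - lam • Ac) Bc (Bᵀ.map f) (0 - lam • Sc) := by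
    rw [hM, hP, fromBlocks_map, fromBlocks_map, fromBlocks_smul]
    ext i j
    rcases i with i | i <;> rcases j with j | j <;>
      simp [fromBlocks, hAc, hBc, hScdef, ← Matrix.map_mul, Matrix.map_apply]
  rw [hblocks, fromBlocks_mulVec] at hv
  have eq1 : (Ac - lam • Ac) *ᵥ x + Bc *ᵥ y = 0 := funext fun i => congrFun hv (Sum.inl i)
  have eq2 : (Bᵀ.map f) *ᵥ x + (0 - lam • Sc) *ᵥ y = 0 := funext fun i => congrFun hv (Sum.inr i)
  have eq1' : Bc *ᵥ y = (lam - 1) • (Ac *ᵥ x) := by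
    have h : (Ac - lam • Ac) *ᵥ x = (1 - lam) • (Ac *ᵥ x) := by
      rw [Matrix.sub_mulVec, Matrix.smul_mulVec, sub_smul, one_smul]
    rw [h] at eq1
    have h2 := eq_neg_of_add_eq_zero_right eq1
    rw [h2, ← neg_smul]
    congr 1
    ring
  have eq2' : (Bᵀ.map f) *ᵥ x = lam • (Sc *ᵥ y) := by
    have h : (0 - lam • Sc) *ᵥ y = -(lam • (Sc *ᵥ y)) := by
      rw [Matrix.sub_mulVec, Matrix.zero_mulVec, Matrix.smul_mulVec]
      simp
    rw [h] at eq2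
    exact add_neg_eq_zero.mp eq2
  -- combine
  set E := Bᵀ.map f * (A⁻¹).map f with hEdef
  have hEB : E * Bc = Sc := by
    rw [hEdef, hBc, hScdef, ← Matrix.map_mul, ← Matrix.map_mul]
  have hEA : E * Ac = Bᵀ.map f := by
    rw [hEdef, hAc, Matrix.mul_assoc, ← Matrix.map_mul,
      Matrix.nonsing_inv_mul _ hdetA.isUnit, Matrix.map_one f f.map_zero f.map_one,
      Matrix.mul_one]
  have comb : Sc *ᵥ y = ((lam - 1) * lam) • (Sc *ᵥ y) := by
    have h : E *ᵥ (Bc *ᵥ y) = (lam - 1) • (E *ᵥ (Ac *ᵥ x)) := by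
      rw [eq1', mulVec_smul]
    rw [mulVec_mulVec, mulVec_mulVec, hEB, hEA, eq2', smul_smul] at h
    exact h
  by_cases hl1 : lam = 1
  · exact Or.inl hl1
  by_cases hy0 : y = 0
  · -- then x = 0, contradicting v ≠ 0
    exfalso
    have hBy : Bc *ᵥ y = 0 := by rw [hy0, mulVec_zero]
    rw [hBy] at eq1'
    have hAx : Ac *ᵥ x = 0 := by
      rcases smul_eq_zero.mp eq1'.symm with h | h
      · exact absurd (sub_eq_zero.mp h) hl1
      · exact h
    have hdetAc : Ac.det ≠ 0 := by
      have h : (A.map ⇑f).det = f A.det := (RingHom.map_det f A).symm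
      rw [hAc, h]
      simpa using hdetA
    have hx0 : x = 0 := by
      by_contra hx0
      exact hdetAc ((Matrix.exists_mulVec_eq_zero_iff).mp ⟨x, hx0, hAx⟩)
    apply hv0
    funext i
    cases i with
    | inl i => exact congrFun hx0 i
    | inr i => exact congrFun hy0 i
  · -- quadratic case
    have hdetSc : Sc.det ≠ 0 := by
      have h : ((Bᵀ * A⁻¹ * B).map ⇑f).det = f (Bᵀ * A⁻¹ * B).det := (RingHom.map_det f _).symm
      rw [hScdef, h]
      simpa using hdetS
    have hSy : Sc *ᵥ y ≠ 0 := fun h =>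
      hdetSc ((Matrix.exists_mulVec_eq_zero_iff).mp ⟨y, hy0, h⟩)
    have hzero : ((lam - 1) * lam - 1) • (Sc *ᵥ y) = 0 := by
      rw [sub_smul, one_smul, ← comb, sub_self]
    have hquad : (lam - 1) * lam - 1 = 0 := by
      rcases smul_eq_zero.mp hzero with h | h
      · exact h
      · exact absurd h hSy
    right
    have h5 : ((Real.sqrt 5 : ℝ) : ℂ) ^ 2 = 5 := by
      rw [← Complex.ofReal_pow, Real.sq_sqrt (by norm_num : (0:ℝ) ≤ 5)]
      norm_num
    have hfact : (2 * lam - 1 - (Real.sqrt 5 : ℝ)) * (2 * lam - 1 + (Real.sqrt 5 : ℝ)) = 0 := by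
      have h : (2 * lam - 1 - ((Real.sqrt 5 : ℝ) : ℂ)) * (2 * lam - 1 + ((Real.sqrt 5 : ℝ) : ℂ))
          = 4 * ((lam - 1) * lam - 1) + (5 - ((Real.sqrt 5 : ℝ) : ℂ) ^ 2) := by ring
      rw [h, hquad, h5]
      ring
    rcases mul_eq_zero.mp hfact with h | h
    · left
      push_cast
      linear_combination h / 2
    · right
      push_cast
      linear_combination h / 2
end

section
/- With M and P as in the Murphy–Golub–Wathen setting, the preconditioned matrix T = P⁻¹M satisfies the polynomial identity (T − I)(T² − T − I) = 0; consequently any Krylov method with exact Schur complement converges in at most 3 iterations. -/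
open Matrix

theorem mgw_polynomial {n m : ℕ}
    (A : Matrix (Fin n) (Fin n) ℝ) (B : Matrix (Fin n) (Fin m) ℝ)
    (hA : A.PosDef) (hB : B.rank = m)
    (M P T : Matrix (Fin n ⊕ Fin m) (Fin n ⊕ Fin m) ℝ)
    (hM : M = Matrix.fromBlocks A B Bᵀ 0)
    (hP : P = Matrix.fromBlocks A 0 0 (Bᵀ * A⁻¹ * B))
    (hT : T = P⁻¹ * M) :
    (T - 1) * (T ^ 2 - T - 1) = 0 := by
  set S : Matrix (Fin m) (Fin m) ℝ := Bᵀ * A⁻¹ * B with hSdef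
  have hBt : Bᴴ = Bᵀ := Matrix.conjTranspose_eq_transpose_of_trivial B
  -- B has trivial kernel
  have hker : LinearMap.ker B.mulVecLin = ⊥ := by
    have h1 := LinearMap.finrank_range_add_finrank_ker B.mulVecLin
    rw [show Module.finrank ℝ (LinearMap.range B.mulVecLin) = m from hB] at h1
    simp only [Module.finrank_pi, Fintype.card_fin] at h1
    have : Module.finrank ℝ (LinearMap.ker B.mulVecLin) = 0 := by omega
    exact Submodule.finrank_eq_zero.mp this
  have hBinj : ∀ x : Fin m → ℝ, B *ᵥ x = 0 → x = 0 := by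
    intro x hx
    have : x ∈ LinearMap.ker B.mulVecLin := by simpa [Matrix.mulVecLin_apply] using hx
    simpa [hker] using this
  have hAinv : (A⁻¹).PosDef := hA.inv
  have hS : S.PosDef := by
    rw [Matrix.posDef_iff_dotProduct_mulVec]
    constructor
    · rw [hSdef, ← hBt]
      exact Matrix.isHermitian_conjTranspose_mul_mul B hAinv.isHermitian
    · intro x hx
      have hBx : B *ᵥ x ≠ 0 := fun h => hx (hBinj x h)
      have h2 := hAinv.dotProduct_mulVec_pos hBx
      have : S = Bᴴ * A⁻¹ * B := by rw [hBt]
      rw [this]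
      simpa only [star_mulVec, dotProduct_mulVec, vecMul_vecMul] using h2
  have hSu : IsUnit S.det := hS.det_pos.ne'.isUnit
  have hAu : IsUnit A.det := hA.det_pos.ne'.isUnit
  have hSS : S⁻¹ * S = 1 := Matrix.nonsing_inv_mul S hSu
  have hAA : A⁻¹ * A = 1 := Matrix.nonsing_inv_mul A hAu
  -- inverse of P
  have hPinv : P⁻¹ = Matrix.fromBlocks A⁻¹ 0 0 S⁻¹ := by
    rw [hP, Matrix.inv_fromBlocks_zero₂₁_of_isUnit_iff A 0 S
      (by simp only [Matrix.isUnit_iff_isUnit_det]; exact iff_of_true hAu hSu)]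
    simp
  set X : Matrix (Fin n) (Fin m) ℝ := A⁻¹ * B with hX
  set Y : Matrix (Fin m) (Fin n) ℝ := S⁻¹ * Bᵀ with hY
  have hTb : T = Matrix.fromBlocks 1 X Y 0 := by
    rw [hT, hPinv, hM, Matrix.fromBlocks_multiply]
    simp [hAA, hX, hY]
  have hYX : Y * X = 1 := by
    have hassoc : S⁻¹ * Bᵀ * (A⁻¹ * B) = S⁻¹ * (Bᵀ * A⁻¹ * B) := by
      rw [Matrix.mul_assoc, ← Matrix.mul_assoc Bᵀ]
    rw [hY, hX, hassoc, ← hSdef, hSS]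
  have e1 : T - 1 = Matrix.fromBlocks 0 X Y (-1) := by
    rw [hTb, show (1 : Matrix (Fin n ⊕ Fin m) (Fin n ⊕ Fin m) ℝ) = Matrix.fromBlocks 1 0 0 1 from
      Matrix.fromBlocks_one.symm, sub_eq_add_neg, Matrix.fromBlocks_neg, Matrix.fromBlocks_add]
    simp
  have e2 : T ^ 2 - T - 1 = Matrix.fromBlocks (X * Y - 1) 0 0 0 := by
    rw [sq, hTb, Matrix.fromBlocks_multiply,
      show (1 : Matrix (Fin n ⊕ Fin m) (Fin n ⊕ Fin m) ℝ) = Matrix.fromBlocks 1 0 0 1 from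
        Matrix.fromBlocks_one.symm, sub_eq_add_neg, sub_eq_add_neg,
      Matrix.fromBlocks_neg, Matrix.fromBlocks_neg, Matrix.fromBlocks_add, Matrix.fromBlocks_add]
    simp [hYX]
    abel
  rw [e1, e2, Matrix.fromBlocks_multiply,
    show (0 : Matrix (Fin n ⊕ Fin m) (Fin n ⊕ Fin m) ℝ) = Matrix.fromBlocks 0 0 0 0 by simp]
  simp only [Matrix.mul_zero, Matrix.zero_mul, add_zero, zero_add, Matrix.mul_sub,
    ← Matrix.mul_assoc, hYX]
  simp
end

section
/- Inexact Newton linear convergence in 1D: let f : ℝ → ℝ be C¹ with f(x*) = 0 and f'(x*) ≠ 0, and let η ∈ [0, 1). Then there is δ > 0 such that any iterate x with |x − x*| < δ and any step s satisfying |f'(x)s + f(x)| ≤ η|f(x)| yields |x + s − x*| ≤ η' |x − x*| for some fixed η' < 1 (depending only on η, f, x*). -/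
theorem inexact_newton_linear_1d (f : ℝ → ℝ) (hf : ContDiff ℝ 1 f)
    (xs : ℝ) (hroot : f xs = 0) (hderiv : deriv f xs ≠ 0)
    (η : ℝ) (hη0 : 0 ≤ η) (hη1 : η < 1) :
    ∃ η' < 1, ∃ δ > 0, ∀ x s : ℝ, |x - xs| < δ →
      |deriv f x * s + f x| ≤ η * |f x| →
      |x + s - xs| ≤ η' * |x - xs| := by
  set a := |deriv f xs| with ha
  have ha0 : 0 < a := abs_pos.mpr hderiv
  set ε := a * (1 - η) / 8 with hε
  have hε0 : 0 < ε := by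
    have : 0 < 1 - η := by linarith
    positivity
  have hεa : ε < a := by nlinarith
  refine ⟨(η * (a + ε) + 2 * ε) / (a - ε), ?_, ?_⟩
  · rw [div_lt_one (by linarith)]
    nlinarith
  · -- eventual estimates
    have hd : HasDerivAt f (deriv f xs) xs :=
      ((hf.differentiable one_ne_zero) xs).hasDerivAt
    have h1 : ∀ᶠ x in nhds xs, |f x - f xs - (x - xs) * deriv f xs| ≤ ε * |x - xs| := by
      have := (hasDerivAt_iff_isLittleO.mp hd).def hε0
      filter_upwards [this] with x hx
      simpa [Real.norm_eq_abs, smul_eq_mul] using hx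
    have hc : Continuous (deriv f) := hf.continuous_deriv le_rfl
    have h2 : ∀ᶠ x in nhds xs, |deriv f x - deriv f xs| < ε := by
      have := Metric.tendsto_nhds.mp (hc.continuousAt (x := xs)) ε hε0
      filter_upwards [this] with x hx
      simpa [Real.dist_eq] using hx
    obtain ⟨δ, hδ0, hδ⟩ := Metric.eventually_nhds_iff.mp (h1.and h2)
    refine ⟨δ, hδ0, fun x s hx hs => ?_⟩
    obtain ⟨hA, hB⟩ := hδ (by simpa [Real.dist_eq] using hx)
    rw [hroot, sub_zero] at hA
    set d := deriv f x with hdd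
    have hdlow : a - ε ≤ |d| := by
      have := abs_sub_abs_le_abs_sub d (deriv f xs)
      rw [abs_sub_comm] at hB
      have h := (abs_sub_abs_le_abs_sub (deriv f xs) d).trans hB.le
      linarith
    have hfx : |f x| ≤ (a + ε) * |x - xs| := by
      calc |f x| = |(f x - (x - xs) * deriv f xs) + (x - xs) * deriv f xs| := by
            congr 1; ring
        _ ≤ |f x - (x - xs) * deriv f xs| + |(x - xs) * deriv f xs| := abs_add_le _ _
        _ = |f x - (x - xs) * deriv f xs| + |x - xs| * a := by rw [abs_mul]
        _ ≤ ε * |x - xs| + |x - xs| * a := by gcongr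
        _ = (a + ε) * |x - xs| := by ring
    have hres : |f x - d * (x - xs)| ≤ 2 * ε * |x - xs| := by
      have : f x - d * (x - xs) =
          (f x - (x - xs) * deriv f xs) + (deriv f xs - d) * (x - xs) := by ring
      calc |f x - d * (x - xs)|
          ≤ |f x - (x - xs) * deriv f xs| + |(deriv f xs - d) * (x - xs)| := by
            rw [this]; exact abs_add_le _ _
        _ ≤ ε * |x - xs| + ε * |x - xs| := by
            rw [abs_mul]; gcongr
            rw [abs_sub_comm]; exact hB.le
        _ = 2 * ε * |x - xs| := by ring
    have key : |d| * |x + s - xs| ≤ (η * (a + ε) + 2 * ε) * |x - xs| := by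
      have heq : d * (x + s - xs) = (d * s + f x) - (f x - d * (x - xs)) := by ring
      calc |d| * |x + s - xs| = |d * (x + s - xs)| := (abs_mul _ _).symm
        _ = |(d * s + f x) - (f x - d * (x - xs))| := by rw [heq]
        _ ≤ |d * s + f x| + |f x - d * (x - xs)| := by apply abs_sub
        _ ≤ η * |f x| + 2 * ε * |x - xs| := by gcongr
        _ ≤ η * ((a + ε) * |x - xs|) + 2 * ε * |x - xs| := by gcongr
        _ = (η * (a + ε) + 2 * ε) * |x - xs| := by ring
    rw [div_mul_eq_mul_div, le_div_iff₀ (by linarith)]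
    nlinarith [abs_nonneg (x + s - xs), abs_nonneg (x - xs)]
end
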